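/- Let V be a finite set of primes, D ∈ ℕ, and for 1 ≤ k ≤ D let Π_k(V) be the set of integers having exactly k distinct prime factors, all in V, each appearing with exponent in {1,...,D}. Then Π_k(V) can be written as a union of at most C_D · (log|V| + 1) sets Λ each of which has property 𝒪: there exist pairwise disjoint sets S₁, ..., S_k of prime powers of primes in V such that Λ ⊆ S₁⋯S_k (the product set) and the elements of S₁ ∪ ... ∪ S_k are pairwise coprime. -/

import Mathlib

open Finset

/-- `n ∈ Π_k(V)`: `n` has exactly `k` distinct prime factors, all in `V`, each
appearing with exponent in `{1,…,D}`. -/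
def MemPik (V : Finset ℕ) (D k n : ℕ) : Prop :=
  ∃ (S : Finset ℕ) (γ : ℕ → ℕ), S ⊆ V ∧ S.card = k ∧
    (∀ p ∈ S, 1 ≤ γ p ∧ γ p ≤ D) ∧ n = ∏ p ∈ S, p ^ γ p

/-- Property `𝒪` for a set `Λ` (with parameters `V`, `D`, `k`): there exist pairwise
disjoint sets `S₁,…,S_k` of prime powers (with primes in `V` and exponents in
`{1,…,D}`) whose union consists of pairwise coprime elements, such that
`Λ ⊆ S₁⋯S_k` (the product set). -/
def PropertyO (V : Finset ℕ) (D k : ℕ) (Λ : Set ℕ) : Prop :=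
  ∃ S : Fin k → Set ℕ,
    (∀ j, ∀ s ∈ S j, ∃ p ∈ V, ∃ e : ℕ, 1 ≤ e ∧ e ≤ D ∧ s = p ^ e) ∧
    (Pairwise fun j j' => Disjoint (S j) (S j')) ∧
    (∀ x y : ℕ, (∃ j, x ∈ S j) → (∃ j, y ∈ S j) → x ≠ y → Nat.Coprime x y) ∧
    (∀ n ∈ Λ, ∃ s : Fin k → ℕ, (∀ j, s j ∈ S j) ∧ n = ∏ j, s j)



lemma card_injOn_subtype (N k : ℕ) (T : Finset (Fin N)) (hT : T.card = k) :
    Fintype.card {f : Fin N → Fin k // Set.InjOn f ↑T} = k.factorial * k ^ (N - k) := by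
  classical
  have e : {f : Fin N → Fin k // Set.InjOn f ↑T} ≃
      ((↥T ↪ Fin k) × ({x : Fin N // x ∉ T} → Fin k)) :=
    { toFun := fun f =>
        (⟨fun a => f.1 a, fun a b hab => Subtype.ext (f.2 a.2 b.2 hab)⟩, fun x => f.1 x),
      invFun := fun fg =>
        ⟨fun x => if h : x ∈ T then fg.1 ⟨x, h⟩ else fg.2 ⟨x, h⟩, by
          intro a ha b hb hab
          simp only [Finset.mem_coe] at ha hb
          simp only [dif_pos ha, dif_pos hb] at hab
          exact congrArg Subtype.val (fg.1.injective hab)⟩,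
      left_inv := by
        intro f
        apply Subtype.ext
        funext x
        by_cases h : x ∈ T <;> simp [h] <;> rfl
      right_inv := by
        intro fg
        refine Prod.ext ?_ ?_
        · apply Function.Embedding.ext; intro a; simp
        · funext x; simp [x.2] }
  rw [Fintype.card_congr e, Fintype.card_prod, Fintype.card_embedding_eq, Fintype.card_fun,
    Fintype.card_coe, hT, Fintype.card_fin, Nat.descFactorial_self, Fintype.card_subtype_compl,
    Fintype.card_fin, Fintype.card_coe, hT]

lemma two_mul_pow_le (n : ℕ) (hn : 1 ≤ n) : 2 * n ^ n ≤ (n + 1) ^ n := by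
  have hn' : (0:ℝ) < n := by exact_mod_cast hn
  have hinv : (0:ℝ) ≤ (n:ℝ)⁻¹ := by positivity
  have h := one_add_mul_le_pow (a := (n:ℝ)⁻¹) (by linarith) n
  have hmul : (n:ℝ) * (n:ℝ)⁻¹ = 1 := mul_inv_cancel₀ (ne_of_gt hn')
  have h2 : (2:ℝ) ≤ (1 + (n:ℝ)⁻¹) ^ n := by nlinarith [h]
  have key : (2:ℝ) * (n:ℝ) ^ n ≤ ((n:ℝ) + 1) ^ n := by
    have hpos : (0:ℝ) < (n:ℝ) ^ n := by positivity
    calc (2:ℝ) * (n:ℝ)^n ≤ (1 + (n:ℝ)⁻¹)^n * (n:ℝ)^n := by nlinarith [h2, hpos]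
      _ = ((1 + (n:ℝ)⁻¹) * (n:ℝ))^n := by rw [mul_pow]
      _ = ((n:ℝ)+1)^n := by rw [add_mul, one_mul, inv_mul_cancel₀ (ne_of_gt hn'), add_comm]
  exact_mod_cast key

lemma phf_exists (k N : ℕ) (hk : 1 ≤ k) (hkN : k ≤ N) :
    ∃ r : ℕ, 1 ≤ r ∧ r ≤ k ^ k * (k * (Nat.log 2 N + 1)) + 1 ∧
      ∃ F : Fin r → (Fin N → Fin k),
        ∀ T : Finset (Fin N), T.card = k → ∃ i, Set.InjOn (F i) ↑T := by
  classical
  set m := k ^ k with hm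
  set t := k * (Nat.log 2 N + 1) with ht
  set r := (m - 1) * t + 1 with hr
  have hm1 : 1 ≤ m := Nat.one_le_pow _ _ hk
  have hN1 : 1 ≤ N := hk.trans hkN
  refine ⟨r, le_add_self, ?_, ?_⟩
  · have : (m - 1) * t ≤ m * t := Nat.mul_le_mul_right _ (Nat.sub_le _ _)
    omega
  set A := k ^ N with hA
  set G := k.factorial * k ^ (N - k) with hG
  set B := A - G with hB
  have hA1 : 1 ≤ A := Nat.one_le_pow _ _ hk
  have hG1 : 1 ≤ G := Nat.mul_pos (Nat.factorial_pos k) (Nat.pow_pos hk)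
  have hGA : A ≤ m * G := by
    calc A = k ^ (k + (N - k)) := by rw [Nat.add_sub_cancel' hkN]
      _ = k ^ k * (1 * k ^ (N - k)) := by rw [one_mul, pow_add]
      _ ≤ k ^ k * (k.factorial * k ^ (N - k)) :=
          Nat.mul_le_mul_left _ (Nat.mul_le_mul_right _ (Nat.one_le_iff_ne_zero.mpr
            (Nat.factorial_ne_zero k)))
  have hBA : B < A := Nat.sub_lt hA1 hG1
  have hmB : m * B ≤ (m - 1) * A := by
    have h1 : m * B = m * A - m * G := Nat.mul_sub m A G
    have h2 : (m - 1) * A = m * A - 1 * A := Nat.sub_mul m 1 A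
    rw [h1, h2, one_mul]
    exact Nat.sub_le_sub_left hGA _
  -- the key counting inequality
  have hlt : N.choose k * B ^ r < A ^ r := by
    rcases Nat.eq_or_lt_of_le hm1 with hmeq | hm2
    · -- m = 1, then B = 0
      have hB0 : B = 0 := by
        have := hmB
        rw [← hmeq] at this
        simpa using this
      rw [hB0, hr, pow_succ, mul_zero, mul_zero]
      exact Nat.pow_pos hA1
    · -- m ≥ 2
      have hchoose : N.choose k < 2 ^ t := by
        calc N.choose k ≤ N ^ k := Nat.choose_le_pow N k
          _ < (2 ^ (Nat.log 2 N + 1)) ^ k :=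
              Nat.pow_lt_pow_left (Nat.lt_pow_succ_log_self (by norm_num) N) (by omega)
          _ = 2 ^ t := by rw [← pow_mul, ht, mul_comm]
      have hkey : 2 * (m - 1) ^ (m - 1) ≤ m ^ (m - 1) := by
        have := two_mul_pow_le (m - 1) (by omega)
        have hm' : m - 1 + 1 = m := by omega
        rwa [hm'] at this
      have h2t : 2 ^ t * (m - 1) ^ ((m - 1) * t) ≤ m ^ ((m - 1) * t) := by
        calc 2 ^ t * (m - 1) ^ ((m - 1) * t) = (2 * (m - 1) ^ (m - 1)) ^ t := by
              rw [mul_pow, ← pow_mul, mul_comm (m-1) t, pow_mul]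
          _ ≤ (m ^ (m - 1)) ^ t := Nat.pow_le_pow_left hkey t
          _ = m ^ ((m - 1) * t) := by rw [← pow_mul, mul_comm]
      have hstep : N.choose k * B ^ ((m - 1) * t) < A ^ ((m - 1) * t) := by
        have hpm : 0 < m ^ ((m - 1) * t) := Nat.pow_pos (by omega)
        have hmul : N.choose k * B ^ ((m-1)*t) * m ^ ((m-1)*t) <
            A ^ ((m-1)*t) * m ^ ((m-1)*t) := by
          calc N.choose k * B ^ ((m-1)*t) * m ^ ((m-1)*t)
              = N.choose k * (m * B) ^ ((m-1)*t) := by rw [mul_pow]; ring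
            _ ≤ N.choose k * ((m - 1) * A) ^ ((m-1)*t) :=
                Nat.mul_le_mul_left _ (Nat.pow_le_pow_left hmB _)
            _ = N.choose k * ((m-1) ^ ((m-1)*t) * A ^ ((m-1)*t)) := by rw [mul_pow]
            _ < 2 ^ t * ((m-1) ^ ((m-1)*t) * A ^ ((m-1)*t)) := by
                have hpos : 0 < (m-1) ^ ((m-1)*t) * A ^ ((m-1)*t) :=
                  Nat.mul_pos (Nat.pow_pos (by omega)) (Nat.pow_pos hA1)
                exact (Nat.mul_lt_mul_right hpos).mpr hchoose
            _ = (2 ^ t * (m-1) ^ ((m-1)*t)) * A ^ ((m-1)*t) := by ring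
            _ ≤ m ^ ((m-1)*t) * A ^ ((m-1)*t) := Nat.mul_le_mul_right _ h2t
            _ = A ^ ((m-1)*t) * m ^ ((m-1)*t) := by ring
        exact Nat.lt_of_mul_lt_mul_right hmul
      rcases Nat.eq_zero_or_pos B with hB0 | hBpos
      · rw [hB0, hr, pow_succ, mul_zero, mul_zero]
        exact Nat.pow_pos hA1
      · rw [hr, pow_succ, pow_succ, ← mul_assoc]
        exact Nat.mul_lt_mul'' hstep hBA
  -- counting argument
  by_contra hcon
  push_neg at hcon
  have hsub : (Finset.univ : Finset (Fin r → Fin N → Fin k)) ⊆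
      (Finset.powersetCard k (Finset.univ : Finset (Fin N))).biUnion
        (fun T => Fintype.piFinset (fun _ : Fin r =>
          Finset.univ.filter (fun f : Fin N → Fin k => ¬ Set.InjOn f ↑T))) := by
    intro F _
    obtain ⟨T, hTcard, hTbad⟩ := hcon F
    refine Finset.mem_biUnion.mpr ⟨T, ?_, ?_⟩
    · exact Finset.mem_powersetCard.mpr ⟨Finset.subset_univ _, hTcard⟩
    · exact Fintype.mem_piFinset.mpr fun i => Finset.mem_filter.mpr ⟨Finset.mem_univ _, hTbad i⟩
  have hcard := Finset.card_le_card hsub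
  have hbadcard : ∀ T : Finset (Fin N), T.card = k →
      (Finset.univ.filter (fun f : Fin N → Fin k => ¬ Set.InjOn f ↑T)).card = B := by
    intro T hT
    have hgood : (Finset.univ.filter (fun f : Fin N → Fin k => Set.InjOn f ↑T)).card = G := by
      rw [← Fintype.card_subtype]
      exact card_injOn_subtype N k T hT
    have hsplit := Finset.card_filter_add_card_filter_not
      (s := (Finset.univ : Finset (Fin N → Fin k)))
      (p := fun f => Set.InjOn f ↑T)
    have htot : (Finset.univ : Finset (Fin N → Fin k)).card = A := by
      rw [Finset.card_univ, Fintype.card_fun, Fintype.card_fin, Fintype.card_fin]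
    omega
  have hle : (Finset.univ : Finset (Fin r → Fin N → Fin k)).card ≤ N.choose k * B ^ r := by
    calc (Finset.univ : Finset (Fin r → Fin N → Fin k)).card
        ≤ ∑ T ∈ Finset.powersetCard k (Finset.univ : Finset (Fin N)),
            (Fintype.piFinset (fun _ : Fin r =>
              Finset.univ.filter (fun f : Fin N → Fin k => ¬ Set.InjOn f ↑T))).card :=
          hcard.trans (Finset.card_biUnion_le)
      _ = ∑ T ∈ Finset.powersetCard k (Finset.univ : Finset (Fin N)), B ^ r := by
          apply Finset.sum_congr rfl
          intro T hT
          rw [Fintype.card_piFinset]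
          rw [Finset.prod_const, Finset.card_univ, Fintype.card_fin,
            hbadcard T (Finset.mem_powersetCard.mp hT).2]
      _ = N.choose k * B ^ r := by
          rw [Finset.sum_const, Finset.card_powersetCard, Finset.card_univ, Fintype.card_fin,
            smul_eq_mul]
  have htot2 : (Finset.univ : Finset (Fin r → Fin N → Fin k)).card = A ^ r := by
    rw [Finset.card_univ, Fintype.card_fun, Fintype.card_fun]
    simp [hA]
  omega

/-- Partition lemma: there is a constant `C_D` such that for every finite set `V` of
primes and every `1 ≤ k ≤ D`, the set `Π_k(V)` can be covered by at most
`C_D · (log |V| + 1)` sets each having property `𝒪`. -/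
theorem pik_cover_by_propertyO (D : ℕ) (hD : 1 ≤ D) :
    ∃ C : ℝ, 0 < C ∧
      ∀ (V : Finset ℕ), (∀ p ∈ V, p.Prime) →
        ∀ k : ℕ, 1 ≤ k → k ≤ D →
          ∃ (r : ℕ) (Λ : Fin r → Set ℕ),
            (r : ℝ) ≤ C * (Real.log V.card + 1) ∧
            (∀ n : ℕ, MemPik V D k n → ∃ i, n ∈ Λ i) ∧
            (∀ i, PropertyO V D k (Λ i)) := by
  classical
  set P : ℝ := (D:ℝ) ^ D with hP
  have hD1 : (1:ℝ) ≤ (D:ℝ) := by exact_mod_cast hD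
  have hP1 : (1:ℝ) ≤ P := one_le_pow₀ hD1
  refine ⟨P * (2 * P * D + 1), by positivity, ?_⟩
  intro V hV k hk hkD
  have hlog0 : 0 ≤ Real.log V.card := Real.log_natCast_nonneg _
  by_cases hNk : k ≤ V.card
  swap
  · -- small case: Π_k(V) is empty
    refine ⟨1, fun _ => (∅ : Set ℕ), ?_, ?_, ?_⟩
    · have h1 : (1:ℝ) ≤ 2 * P * D + 1 := by nlinarith
      have h2 : (1:ℝ) ≤ P * (2 * P * D + 1) := by
        calc (1:ℝ) = 1 * 1 := by ring
          _ ≤ P * (2 * P * D + 1) := mul_le_mul hP1 h1 zero_le_one (by linarith)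
      calc ((1:ℕ):ℝ) = 1 * 1 := by norm_num
        _ ≤ (P * (2 * P * D + 1)) * (Real.log ↑V.card + 1) :=
            mul_le_mul h2 (by linarith) zero_le_one (by linarith)
    · rintro n ⟨S, γ, hSV, hScard, -, -⟩
      exact absurd (Finset.card_le_card hSV) (by omega)
    · intro i
      exact ⟨fun _ => ∅, by simp, by simp [Pairwise], by simp, by simp⟩
  · set N := V.card with hN
    have hN1 : 1 ≤ N := hk.trans hNk
    obtain ⟨r, hr1, hrle, F, hF⟩ := phf_exists k N hk hNk
    let ev : ↥V ≃ Fin N := V.equivFin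
    let SS : (Fin r × (Fin k → Fin D)) → Fin k → Set ℕ := fun q j =>
      {x | ∃ pv : ↥V, F q.1 (ev pv) = j ∧ x = (pv : ℕ) ^ ((q.2 j : ℕ) + 1)}
    let Lam : (Fin r × (Fin k → Fin D)) → Set ℕ := fun q =>
      {n | ∃ s : Fin k → ℕ, (∀ j, s j ∈ SS q j) ∧ n = ∏ j, s j}
    have hcardι : Fintype.card (Fin r × (Fin k → Fin D)) = r * D ^ k := by
      simp [Fintype.card_fun]
    let κ : (Fin r × (Fin k → Fin D)) ≃ Fin (r * D ^ k) := Fintype.equivFinOfCardEq hcardι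
    refine ⟨r * D ^ k, fun i => Lam (κ.symm i), ?_, ?_, ?_⟩
    · -- the size bound
      set L := Nat.log 2 N with hL
      have hLlog : (L : ℝ) ≤ 2 * Real.log N := by
        have h1 : (2:ℕ) ^ L ≤ N := Nat.pow_log_le_self 2 (by omega)
        have h2 : ((2:ℝ)) ^ L ≤ (N:ℝ) := by exact_mod_cast h1
        have h3 : Real.log ((2:ℝ) ^ L) ≤ Real.log N := Real.log_le_log (by positivity) h2
        rw [Real.log_pow] at h3
        have h4 : (0.6931471803 : ℝ) < Real.log 2 := Real.log_two_gt_d9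
        have h5 : (0:ℝ) ≤ (L:ℝ) := Nat.cast_nonneg _
        nlinarith
      -- nat bound: r * D^k ≤ (D^D * D * (L+1) + 1) * D^D
      have hnat : r * D ^ k ≤ (D ^ D * D * (L + 1) + 1) * D ^ D := by
        have h1 : k ^ k ≤ D ^ D :=
          (Nat.pow_le_pow_left hkD k).trans (Nat.pow_le_pow_right (by omega) hkD)
        have h2 : D ^ k ≤ D ^ D := Nat.pow_le_pow_right (by omega) hkD
        have h3 : r ≤ D ^ D * D * (L + 1) + 1 := by
          calc r ≤ k ^ k * (k * (L + 1)) + 1 := hrle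
            _ ≤ D ^ D * (D * (L + 1)) + 1 := by
                have := Nat.mul_le_mul h1 (Nat.mul_le_mul_right (L+1) hkD)
                omega
            _ = D ^ D * D * (L + 1) + 1 := by ring_nf
        exact Nat.mul_le_mul h3 h2
      have hnatR : ((r * D ^ k : ℕ) : ℝ) ≤ (P * D * ((L:ℝ) + 1) + 1) * P := by
        have h2 := (Nat.cast_le (α := ℝ)).mpr hnat
        push_cast at h2
        rw [hP]
        push_cast
        nlinarith [h2]
      have hx0 : 0 ≤ Real.log (N:ℝ) := hlog0
      have hL0 : (0:ℝ) ≤ (L:ℝ) := Nat.cast_nonneg _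
      refine le_trans hnatR ?_
      nlinarith [mul_nonneg (mul_nonneg (le_trans zero_le_one hP1) (le_trans zero_le_one hD1)) hx0, mul_nonneg (le_trans zero_le_one hP1) hx0, mul_nonneg (mul_nonneg (le_trans zero_le_one hP1) (le_trans zero_le_one hP1)) (le_trans zero_le_one hD1)]
    · -- coverage
      rintro n ⟨S, γ, hSV, hScard, hγ, hn⟩
      have hinjT : Set.InjOn (fun p : {p // p ∈ S} => ev ⟨p.1, hSV p.2⟩) ↑S.attach := by
        intro a _ b _ hab
        have := ev.injective hab
        exact Subtype.ext (Subtype.mk_eq_mk.mp this)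
      set T : Finset (Fin N) := S.attach.image (fun p => ev ⟨p.1, hSV p.2⟩) with hT
      have hTcard : T.card = k := by
        rw [hT, Finset.card_image_of_injOn hinjT, Finset.card_attach, hScard]
      obtain ⟨i, hi⟩ := hF T hTcard
      have himg : T.image (F i) = Finset.univ := by
        apply Finset.eq_univ_of_card
        rw [Finset.card_image_of_injOn hi, hTcard, Fintype.card_fin]
      have hsurj : ∀ j : Fin k, ∃ q : {p // p ∈ S}, F i (ev ⟨q.1, hSV q.2⟩) = j := by
        intro j
        have : j ∈ T.image (F i) := by rw [himg]; exact Finset.mem_univ _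
        obtain ⟨x, hxT, hxj⟩ := Finset.mem_image.mp this
        obtain ⟨q, -, hq⟩ := Finset.mem_image.mp hxT
        exact ⟨q, by rw [hq, hxj]⟩
      let ψ : Fin k → {p // p ∈ S} := fun j => (hsurj j).choose
      have hψ : ∀ j, F i (ev ⟨(ψ j).1, hSV (ψ j).2⟩) = j := fun j => (hsurj j).choose_spec
      have hψinj : ∀ a b : {p // p ∈ S},
          F i (ev ⟨a.1, hSV a.2⟩) = F i (ev ⟨b.1, hSV b.2⟩) → a = b := by
        intro a b hab
        have h1 : ev ⟨a.1, hSV a.2⟩ ∈ (↑T : Set (Fin N)) := by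
          simp only [hT, Finset.coe_image, Set.mem_image]
          exact ⟨a, by simp, rfl⟩
        have h2 : ev ⟨b.1, hSV b.2⟩ ∈ (↑T : Set (Fin N)) := by
          simp only [hT, Finset.coe_image, Set.mem_image]
          exact ⟨b, by simp, rfl⟩
        have := hi h1 h2 hab
        exact Subtype.ext (Subtype.mk_eq_mk.mp (ev.injective this))
      let e : Fin k → Fin D := fun j => ⟨γ (ψ j).1 - 1, by
        have := hγ _ (ψ j).2; omega⟩
      refine ⟨κ (i, e), ?_⟩
      show n ∈ Lam (κ.symm (κ (i, e)))
      rw [Equiv.symm_apply_apply]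
      refine ⟨fun j => ((ψ j).1) ^ (γ (ψ j).1), ?_, ?_⟩
      · intro j
        refine ⟨⟨(ψ j).1, hSV (ψ j).2⟩, hψ j, ?_⟩
        have h1 := (hγ _ (ψ j).2).1
        show ((ψ j).1 : ℕ) ^ (γ (ψ j).1) = ((ψ j).1 : ℕ) ^ ((e j : ℕ) + 1)
        congr 1
        show γ (ψ j).1 = γ (ψ j).1 - 1 + 1
        omega
      · rw [hn, ← Finset.prod_attach S (fun p => p ^ γ p)]
        refine Finset.prod_nbij' (fun q => F i (ev ⟨q.1, hSV q.2⟩)) ψ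
          (fun a _ => Finset.mem_univ _) (fun a _ => Finset.mem_attach _ _)
          ?_ (fun j _ => hψ j) ?_
        · intro a _
          exact hψinj _ _ (hψ _)
        · intro a _
          have hh : ψ (F i (ev ⟨a.1, hSV a.2⟩)) = a := hψinj _ _ (hψ _)
          rw [hh]
    · -- property O
      intro i'
      refine ⟨SS (κ.symm i'), ?_, ?_, ?_, fun n hn => hn⟩
      · rintro j s ⟨pv, -, rfl⟩
        refine ⟨pv, pv.2, ((κ.symm i').2 j : ℕ) + 1, by omega, ?_, rfl⟩
        have := ((κ.symm i').2 j).2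
        omega
      · intro j j' hjj'
        rw [Set.disjoint_left]
        rintro x ⟨pv, hj, rfl⟩ ⟨pv', hj', heq⟩
        have hp := hV _ pv.2
        have hp' := hV _ pv'.2
        have hdvd : (pv' : ℕ) ∣ (pv : ℕ) ^ (((κ.symm i').2 j : ℕ) + 1) := by
          rw [heq]
          exact dvd_pow_self _ (by omega)
        have : (pv' : ℕ) = (pv : ℕ) :=
          (Nat.prime_dvd_prime_iff_eq hp' hp).mp (hp'.dvd_of_dvd_pow hdvd)
        have hpv : pv' = pv := Subtype.ext this
        rw [hpv] at hj'
        exact hjj' (hj ▸ hj'.symm ▸ rfl)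
      · rintro x y ⟨j, pv, hj, rfl⟩ ⟨j', pv', hj', rfl⟩ hxy
        have hp := hV _ pv.2
        have hp' := hV _ pv'.2
        by_cases hpq : (pv : ℕ) = (pv' : ℕ)
        · exfalso
          have hpv : pv = pv' := Subtype.ext hpq
          rw [hpv] at hj
          have : j = j' := hj.symm.trans hj'
          rw [hpv, this] at hxy
          exact hxy rfl
        · exact Nat.Coprime.pow _ _ ((Nat.coprime_primes hp hp').mpr hpq)
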